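/- Let D be a (v,k,λ)-covering on point set {1,...,v} with excess multigraph G (where the multiplicity of edge uw is r_D(uw) − λ, with r_D(uw) the number of blocks containing both u and w). If there is a subset S of the points and positive reals (c_u)_{u∈S} such that for each u in S, ∑_{w∈S, w≠u} c_w·μ_{G[S]}(uw) < c_u·(r_D(u) − λ), where r_D(u) is the number of blocks containing u, then D has at least |S| blocks. -/

import Mathlib

open Finset

lemma aux_countP_sum {α : Type*} (M : Multiset α) (p : α → Prop) [DecidablePred p] :
    (M.map fun b => if p b then (1:ℝ) else 0).sum = (M.countP p : ℝ) := by
  induction M using Multiset.induction_on with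
  | empty => simp
  | cons a M ih =>
    simp only [Multiset.map_cons, Multiset.sum_cons, Multiset.countP_cons, ih]
    split_ifs <;> push_cast <;> ring

theorem stmt_9 (v k l : ℕ) (hl : 0 < l) (hk : 3 ≤ k) (hkv : k < v)
    (𝓑 : Multiset (Finset (Fin v)))
    (hblocks : ∀ b ∈ 𝓑, b.card = k)
    (hcov : ∀ u w : Fin v, u ≠ w → l ≤ 𝓑.countP (fun b => u ∈ b ∧ w ∈ b))
    (S : Finset (Fin v)) (c : Fin v → ℝ) (hc : ∀ u ∈ S, 0 < c u)
    (hdom : ∀ u ∈ S,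
      ∑ w ∈ S.erase u,
          c w * ((𝓑.countP (fun b => u ∈ b ∧ w ∈ b) : ℝ) - l)
        < c u * ((𝓑.countP (fun b => u ∈ b) : ℝ) - l)) :
    S.card ≤ Multiset.card 𝓑 := by
  classical
  set L : List (Finset (Fin v)) := 𝓑.toList with hLdef
  have hLB : (L : Multiset (Finset (Fin v))) = 𝓑 := Multiset.coe_toList 𝓑
  -- the rows of the incidence matrix
  set f : Fin v → (Fin L.length → ℝ) := fun u i => if u ∈ L.get i then 1 else 0 with hf
  -- abbreviations
  set R : Fin v → Fin v → ℝ :=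
    fun u w => (𝓑.countP (fun b => u ∈ b ∧ w ∈ b) : ℝ) with hR
  set A : Fin v → Fin v → ℝ := fun u w => R u w - l with hA
  -- inner products of rows
  have key : ∀ u w : Fin v,
      ∑ i : Fin L.length, f u i * f w i = R u w := by
    intro u w
    show _ = ((𝓑.countP (fun b => u ∈ b ∧ w ∈ b) : ℕ) : ℝ)
    have h1 : ∀ i : Fin L.length,
        f u i * f w i = if (u ∈ L.get i ∧ w ∈ L.get i) then (1:ℝ) else 0 := by
      intro i
      simp only [hf]
      split_ifs with h1 h2 h3 <;> simp_all
    rw [Finset.sum_congr rfl fun i _ => h1 i]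
    have h2 : ∑ i : Fin L.length,
        (if (u ∈ L.get i ∧ w ∈ L.get i) then (1:ℝ) else 0)
        = ((L.map fun b => if (u ∈ b ∧ w ∈ b) then (1:ℝ) else 0)).sum := by
      rw [← Fin.sum_univ_fun_getElem]
      exact Finset.sum_congr rfl fun i _ => by simp [List.get_eq_getElem]
    rw [h2]
    have h3 : ((L.map fun b => if (u ∈ b ∧ w ∈ b) then (1:ℝ) else 0)).sum
        = ((𝓑.map fun b => if (u ∈ b ∧ w ∈ b) then (1:ℝ) else 0)).sum := by
      rw [← hLB]; rfl
    rw [h3, aux_countP_sum]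
  have hRsymm : ∀ u w, R u w = R w u := by
    intro u w
    show ((𝓑.countP _ : ℕ) : ℝ) = ((𝓑.countP _ : ℕ) : ℝ)
    norm_cast
    exact Multiset.countP_congr rfl (fun b _ => by simp [and_comm])
  have hRdiag : ∀ u : Fin v, R u u = (𝓑.countP (fun b => u ∈ b) : ℝ) := by
    intro u
    show ((𝓑.countP _ : ℕ) : ℝ) = _
    norm_cast
    exact Multiset.countP_congr rfl (fun b _ => by simp)
  have hA0 : ∀ u w : Fin v, u ≠ w → 0 ≤ A u w := by
    intro u w huw
    have := hcov u w huw
    show 0 ≤ R u w - (l:ℝ)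
    rw [sub_nonneg]
    show ((l:ℕ):ℝ) ≤ ((𝓑.countP _ : ℕ) : ℝ)
    exact_mod_cast this
  -- linear independence of the rows indexed by S
  have li : LinearIndependent ℝ (fun u : {x // x ∈ S} => f ↑u) := by
    rw [linearIndependent_iff']
    intro s g hg u hu
    by_contra hgu
    -- pointwise vanishing
    have hpt : ∀ i : Fin L.length, ∑ p ∈ s, g p * f (↑p) i = 0 := by
      intro i
      have := congrFun hg i
      simpa [Finset.sum_apply] using this
    -- the quadratic form vanishes
    have hQ : ∑ p ∈ s, ∑ q ∈ s, g p * g q * R ↑p ↑q = 0 := by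
      have t1 : ∀ p q : {x // x ∈ S},
          g p * g q * R ↑p ↑q = ∑ i : Fin L.length, (g p * f (↑p) i) * (g q * f (↑q) i) := by
        intro p q
        rw [← key ↑p ↑q, Finset.mul_sum]
        exact Finset.sum_congr rfl fun i _ => by ring
      have e1 : ∑ p ∈ s, ∑ q ∈ s, g p * g q * R ↑p ↑q
          = ∑ i : Fin L.length, (∑ p ∈ s, g p * f (↑p) i) * (∑ q ∈ s, g q * f (↑q) i) := by
        calc ∑ p ∈ s, ∑ q ∈ s, g p * g q * R ↑p ↑q
            = ∑ p ∈ s, ∑ q ∈ s, ∑ i : Fin L.length, (g p * f (↑p) i) * (g q * f (↑q) i) :=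
              Finset.sum_congr rfl fun p _ => Finset.sum_congr rfl fun q _ => t1 p q
          _ = ∑ p ∈ s, ∑ i : Fin L.length, ∑ q ∈ s, (g p * f (↑p) i) * (g q * f (↑q) i) :=
              Finset.sum_congr rfl fun p _ => Finset.sum_comm
          _ = ∑ i : Fin L.length, ∑ p ∈ s, ∑ q ∈ s, (g p * f (↑p) i) * (g q * f (↑q) i) :=
              Finset.sum_comm
          _ = ∑ i : Fin L.length, (∑ p ∈ s, g p * f (↑p) i) * (∑ q ∈ s, g q * f (↑q) i) := by
              refine Finset.sum_congr rfl fun i _ => ?_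
              rw [Finset.sum_mul_sum]
      rw [e1]
      simp [hpt]
    -- weighted variables
    set y : {x // x ∈ S} → ℝ := fun p => g p / c ↑p with hy
    have hcpos : ∀ p : {x // x ∈ S}, 0 < c ↑p := fun p => hc ↑p p.2
    have hgy : ∀ p : {x // x ∈ S}, g p = c ↑p * y p := by
      intro p
      show g p = c ↑p * (g p / c ↑p)
      rw [mul_comm, div_mul_cancel₀ _ (hcpos p).ne']
    -- domination restricted to s
    have hdom' : ∀ p : {x // x ∈ S}, p ∈ s →
        ∑ q ∈ s.erase p, c ↑q * A ↑p ↑q < c ↑p * A ↑p ↑p := by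
      intro p hp
      have hsub : ((s.erase p).map (Function.Embedding.subtype _)) ⊆ S.erase ↑p := by
        intro w hw
        simp only [Finset.mem_map, Function.Embedding.coe_subtype] at hw
        obtain ⟨q, hq, rfl⟩ := hw
        have hq' := Finset.mem_erase.mp hq
        exact Finset.mem_erase.mpr ⟨fun h => hq'.1 (Subtype.ext h), q.2⟩
      have e2 : ∑ q ∈ s.erase p, c ↑q * A ↑p ↑q
          = ∑ w ∈ (s.erase p).map (Function.Embedding.subtype _), c w * A ↑p w := by
        rw [Finset.sum_map]
        rfl
      have e3 : ∑ w ∈ (s.erase p).map (Function.Embedding.subtype _), c w * A ↑p w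
          ≤ ∑ w ∈ S.erase ↑p, c w * A ↑p w := by
        refine Finset.sum_le_sum_of_subset_of_nonneg hsub fun w hw _ => ?_
        have hw' := Finset.mem_erase.mp hw
        exact mul_nonneg (hc w hw'.2).le (hA0 ↑p w (Ne.symm hw'.1))
      have e4 : ∑ w ∈ S.erase ↑p, c w * A ↑p w < c ↑p * A ↑p ↑p := by
        have := hdom ↑p p.2
        have hdd : A (↑p) ↑p = (𝓑.countP (fun b => ↑p ∈ b) : ℝ) - l := by
          show R (↑p) ↑p - (l:ℝ) = _
          rw [hRdiag]
        rw [hdd]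
        exact this
      calc ∑ q ∈ s.erase p, c ↑q * A ↑p ↑q
          = ∑ w ∈ (s.erase p).map (Function.Embedding.subtype _), c w * A ↑p w := e2
        _ ≤ ∑ w ∈ S.erase ↑p, c w * A ↑p w := e3
        _ < c ↑p * A ↑p ↑p := e4
    -- split the quadratic form
    have split : ∀ p : {x // x ∈ S}, ∀ q : {x // x ∈ S},
        g p * g q * R ↑p ↑q = g p * g q * A ↑p ↑q + g p * g q * l := by
      intro p q
      show _ = g p * g q * (R ↑p ↑q - l) + _
      ring
    have hQ2 : (∑ p ∈ s, ∑ q ∈ s, g p * g q * A ↑p ↑q)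
        + (l : ℝ) * (∑ p ∈ s, g p)^2 = 0 := by
      have : ∑ p ∈ s, ∑ q ∈ s, g p * g q * (l:ℝ) = (l:ℝ) * (∑ p ∈ s, g p)^2 := by
        calc ∑ p ∈ s, ∑ q ∈ s, g p * g q * (l:ℝ)
            = (∑ p ∈ s, ∑ q ∈ s, g p * g q) * (l:ℝ) := by
              rw [Finset.sum_mul]
              exact Finset.sum_congr rfl fun p _ => (Finset.sum_mul _ _ _).symm
          _ = ((∑ p ∈ s, g p) * (∑ q ∈ s, g q)) * (l:ℝ) := by
              rw [Finset.sum_mul_sum]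
          _ = (l:ℝ) * (∑ p ∈ s, g p)^2 := by ring
      calc (∑ p ∈ s, ∑ q ∈ s, g p * g q * A ↑p ↑q) + (l : ℝ) * (∑ p ∈ s, g p)^2
          = (∑ p ∈ s, ∑ q ∈ s, g p * g q * A ↑p ↑q)
            + ∑ p ∈ s, ∑ q ∈ s, g p * g q * (l:ℝ) := by rw [this]
        _ = ∑ p ∈ s, ∑ q ∈ s, (g p * g q * A ↑p ↑q + g p * g q * (l:ℝ)) := by
            rw [← Finset.sum_add_distrib]
            exact Finset.sum_congr rfl fun p _ => (Finset.sum_add_distrib).symm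
        _ = ∑ p ∈ s, ∑ q ∈ s, g p * g q * R ↑p ↑q := by
            exact Finset.sum_congr rfl fun p _ => Finset.sum_congr rfl fun q _ =>
              (split p q).symm
        _ = 0 := hQ
    have hTle : (∑ p ∈ s, ∑ q ∈ s, g p * g q * A ↑p ↑q) ≤ 0 := by
      nlinarith [sq_nonneg (∑ p ∈ s, g p), (Nat.cast_pos.mpr hl : (0:ℝ) < l)]
    -- a helper for summing over erase
    have e1 : ∀ (F : {x // x ∈ S} → {x // x ∈ S} → ℝ),
        ∑ p ∈ s, ∑ q ∈ s.erase p, F p q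
          = (∑ p ∈ s, ∑ q ∈ s, F p q) - ∑ p ∈ s, F p p := by
      intro F
      rw [← Finset.sum_sub_distrib]
      refine Finset.sum_congr rfl fun p hp => ?_
      have := Finset.add_sum_erase s (F p) hp
      linarith
    have swap : ∀ (F : {x // x ∈ S} → {x // x ∈ S} → ℝ),
        ∑ p ∈ s, ∑ q ∈ s.erase p, F p q = ∑ p ∈ s, ∑ q ∈ s.erase p, F q p := by
      intro F
      rw [e1 F, e1 (fun p q => F q p), Finset.sum_comm]
    -- expand T into diagonal plus off-diagonal
    have hTsplit : ∑ p ∈ s, ∑ q ∈ s, g p * g q * A ↑p ↑q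
        = (∑ p ∈ s, g p * g p * A ↑p ↑p)
          + ∑ p ∈ s, ∑ q ∈ s.erase p, g p * g q * A ↑p ↑q := by
      rw [e1 (fun p q => g p * g q * A ↑p ↑q)]
      ring
    -- bound off-diagonal terms
    have offbound : ∑ p ∈ s, ∑ q ∈ s.erase p, g p * g q * A ↑p ↑q
        ≥ -∑ p ∈ s, ∑ q ∈ s.erase p,
            c ↑p * c ↑q * A ↑p ↑q * ((y p)^2 + (y q)^2) / 2 := by
      rw [ge_iff_le, neg_le, ← Finset.sum_neg_distrib]
      refine Finset.sum_le_sum fun p hp => ?_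
      rw [← Finset.sum_neg_distrib]
      refine Finset.sum_le_sum fun q hq => ?_
      have hqp : q ≠ p := (Finset.mem_erase.mp hq).1
      have hA' : 0 ≤ A ↑p ↑q := hA0 ↑p ↑q (fun h => hqp (Subtype.ext h.symm))
      have hp' := hcpos p
      have hq' := hcpos q
      rw [hgy p, hgy q]
      have hcc : 0 ≤ c ↑p * c ↑q * A ↑p ↑q :=
        mul_nonneg (mul_nonneg hp'.le hq'.le) hA'
      have expand : (c ↑p * y p) * (c ↑q * y q) * A ↑p ↑q
            + c ↑p * c ↑q * A ↑p ↑q * ((y p)^2 + (y q)^2) / 2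
          = (c ↑p * c ↑q * A ↑p ↑q) * (y p + y q)^2 / 2 := by ring
      have hnn : 0 ≤ (c ↑p * c ↑q * A ↑p ↑q) * (y p + y q)^2 / 2 := by positivity
      linarith
    -- symmetrize the bound
    have symm_eq : ∑ p ∈ s, ∑ q ∈ s.erase p,
          c ↑p * c ↑q * A ↑p ↑q * ((y p)^2 + (y q)^2) / 2
        = ∑ p ∈ s, ∑ q ∈ s.erase p, c ↑p * c ↑q * A ↑p ↑q * (y p)^2 := by
      have h1 : ∑ p ∈ s, ∑ q ∈ s.erase p, c ↑p * c ↑q * A ↑p ↑q * (y q)^2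
          = ∑ p ∈ s, ∑ q ∈ s.erase p, c ↑p * c ↑q * A ↑p ↑q * (y p)^2 := by
        rw [swap (fun p q => c ↑p * c ↑q * A ↑p ↑q * (y q)^2)]
        refine Finset.sum_congr rfl fun p _ => Finset.sum_congr rfl fun q _ => ?_
        show c ↑q * c ↑p * (R ↑q ↑p - (l:ℝ)) * (y p)^2 = c ↑p * c ↑q * (R ↑p ↑q - (l:ℝ)) * (y p)^2
        rw [hRsymm]
        ring
      have h2 : ∀ p q : {x // x ∈ S},
          c ↑p * c ↑q * A ↑p ↑q * ((y p)^2 + (y q)^2) / 2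
            = (c ↑p * c ↑q * A ↑p ↑q * (y p)^2) / 2
              + (c ↑p * c ↑q * A ↑p ↑q * (y q)^2) / 2 := fun p q => by ring
      calc ∑ p ∈ s, ∑ q ∈ s.erase p,
            c ↑p * c ↑q * A ↑p ↑q * ((y p)^2 + (y q)^2) / 2
          = (∑ p ∈ s, ∑ q ∈ s.erase p, (c ↑p * c ↑q * A ↑p ↑q * (y p)^2) / 2)
            + ∑ p ∈ s, ∑ q ∈ s.erase p, (c ↑p * c ↑q * A ↑p ↑q * (y q)^2) / 2 := by
            rw [← Finset.sum_add_distrib]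
            refine Finset.sum_congr rfl fun p _ => ?_
            rw [← Finset.sum_add_distrib]
            exact Finset.sum_congr rfl fun q _ => h2 p q
        _ = ∑ p ∈ s, ∑ q ∈ s.erase p, c ↑p * c ↑q * A ↑p ↑q * (y p)^2 := by
            have h1' : (∑ p ∈ s, ∑ q ∈ s.erase p, (c ↑p * c ↑q * A ↑p ↑q * (y q)^2) / 2)
                = ∑ p ∈ s, ∑ q ∈ s.erase p, (c ↑p * c ↑q * A ↑p ↑q * (y p)^2) / 2 := by
              have h3 := congrArg (· / 2) h1
              simp only [Finset.sum_div] at h3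
              exact h3
            rw [h1', ← Finset.sum_add_distrib]
            refine Finset.sum_congr rfl fun p _ => ?_
            rw [← Finset.sum_add_distrib]
            exact Finset.sum_congr rfl fun q _ => by ring
    -- positivity of the quadratic form
    have hTpos : 0 < ∑ p ∈ s, ∑ q ∈ s, g p * g q * A ↑p ↑q := by
      have lower : ∑ p ∈ s, ∑ q ∈ s, g p * g q * A ↑p ↑q
          ≥ ∑ p ∈ s, (y p)^2 * c ↑p * (c ↑p * A ↑p ↑p - ∑ q ∈ s.erase p, c ↑q * A ↑p ↑q) := by
        rw [hTsplit]
        have := offbound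
        rw [symm_eq] at this
        have ediag : ∑ p ∈ s, g p * g p * A ↑p ↑p
            = ∑ p ∈ s, (y p)^2 * c ↑p * (c ↑p * A ↑p ↑p) := by
          refine Finset.sum_congr rfl fun p _ => ?_
          rw [hgy p]; ring
        have eoff : ∑ p ∈ s, ∑ q ∈ s.erase p, c ↑p * c ↑q * A ↑p ↑q * (y p)^2
            = ∑ p ∈ s, (y p)^2 * c ↑p * (∑ q ∈ s.erase p, c ↑q * A ↑p ↑q) := by
          refine Finset.sum_congr rfl fun p _ => ?_
          rw [Finset.mul_sum]
          exact Finset.sum_congr rfl fun q _ => by ring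
        have expand : ∑ p ∈ s, (y p)^2 * c ↑p * (c ↑p * A ↑p ↑p - ∑ q ∈ s.erase p, c ↑q * A ↑p ↑q)
            = (∑ p ∈ s, (y p)^2 * c ↑p * (c ↑p * A ↑p ↑p))
              - ∑ p ∈ s, (y p)^2 * c ↑p * (∑ q ∈ s.erase p, c ↑q * A ↑p ↑q) := by
          rw [← Finset.sum_sub_distrib]
          exact Finset.sum_congr rfl fun p _ => by ring
        rw [expand, ← ediag, ← eoff]
        linarith
      refine lt_of_lt_of_le ?_ lower
      refine Finset.sum_pos' (fun p hp => ?_) ⟨u, hu, ?_⟩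
      · have hd := hdom' p hp
        have h0 : 0 ≤ c ↑p * A ↑p ↑p - ∑ q ∈ s.erase p, c ↑q * A ↑p ↑q := by linarith
        have h0' : 0 ≤ (y p)^2 * c ↑p := mul_nonneg (sq_nonneg _) (hcpos p).le
        exact mul_nonneg h0' h0
      · have hyu : y u ≠ 0 := by
          simp only [hy]
          exact div_ne_zero hgu (hcpos u).ne'
        have h1 : 0 < (y u)^2 := by positivity
        have h2 : 0 < c ↑u * A ↑u ↑u - ∑ q ∈ s.erase u, c ↑q * A ↑u ↑q := by
          have := hdom' u hu
          linarith
        have := mul_pos (mul_pos h1 (hcpos u)) h2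
        linarith
    linarith
  -- conclude
  have h1 : Fintype.card {x // x ∈ S} ≤ Module.finrank ℝ (Fin L.length → ℝ) :=
    li.fintype_card_le_finrank
  rw [Module.finrank_fin_fun] at h1
  rw [Fintype.card_coe] at h1
  rwa [Multiset.length_toList] at h1
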